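/- arXiv:1801.06486 — 6 statements merged into one kernel-verified Lean document; each statement's English description precedes it below -/
import Mathlib

section
/- For integers i ≥ 1 and real numbers m' > m > 0, the sum over n from i+1 to infinity of Γ(n+m-1)/(Γ(i)·Γ(n-i)) · B(n-i, m'+i) equals Γ(m+i)/(Γ(i)·(m'-m)), where B denotes the Beta function. -/
open Real

/-- Beta function `B(x,y) = ∫₀¹ (1-t)^(y-1) t^(x-1) dt`. -/
noncomputable def betaFn (x y : ℝ) : ℝ := ∫ t in (0:ℝ)..1, (1 - t) ^ (y - 1) * t ^ (x - 1)

lemma betaFn_eq_Gamma (x y : ℝ) (hx : 0 < x) (hy : 0 < y) :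
    betaFn x y = Real.Gamma x * Real.Gamma y / Real.Gamma (x + y) := by
  have hc : Complex.Gamma x * Complex.Gamma y
      = Complex.Gamma (x + y) * Complex.betaIntegral x y :=
    Complex.Gamma_mul_Gamma_eq_betaIntegral (by simpa using hx) (by simpa using hy)
  have hbeta : Complex.betaIntegral x y = (betaFn x y : ℂ) := by
    rw [Complex.betaIntegral, betaFn, ← intervalIntegral.integral_ofReal]
    refine intervalIntegral.integral_congr fun t ht => ?_
    rw [Set.uIcc_of_le (by norm_num : (0:ℝ) ≤ 1)] at ht
    obtain ⟨ht0, ht1⟩ := ht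
    push_cast
    rw [Complex.ofReal_cpow ht0, Complex.ofReal_cpow (by linarith : (0:ℝ) ≤ 1 - t)]
    push_cast
    ring
  rw [hbeta, ← Complex.ofReal_add, Complex.Gamma_ofReal, Complex.Gamma_ofReal,
    Complex.Gamma_ofReal, ← Complex.ofReal_mul, ← Complex.ofReal_mul,
    Complex.ofReal_inj] at hc
  have hΓ : Real.Gamma (x + y) ≠ 0 := (Real.Gamma_pos_of_pos (by linarith)).ne'
  field_simp [hc]
  rw [hc]; ring

lemma gamma_ratio_tendsto_zero {a b : ℝ} (ha : 0 < a) (hab : a < b) :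
    Filter.Tendsto (fun k : ℕ => Real.Gamma (k + a) / Real.Gamma (k + b))
      Filter.atTop (nhds 0) := by
  have hb0 : 0 < b := lt_trans ha hab
  set c := (b - a) / (b + 1) with hc
  have hc0 : 0 < c := div_pos (by linarith) (by linarith)
  set f : ℕ → ℝ := fun k => Real.Gamma (k + a) / Real.Gamma (k + b) with hf
  have hfpos : ∀ k, 0 < f k := fun k =>
    div_pos (Real.Gamma_pos_of_pos (by positivity)) (Real.Gamma_pos_of_pos (by positivity))
  have key : ∀ k, f k ≤ f 0 * Real.exp (-c * ∑ j ∈ Finset.range k, (1 / (j + 1) : ℝ)) := by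
    intro k
    induction k with
    | zero => simp
    | succ k ih =>
      have hrec : f (k + 1) = f k * ((k + a) / (k + b)) := by
        have h1 : ((k + 1 : ℕ) : ℝ) + a = (↑k + a) + 1 := by push_cast; ring
        have h2 : ((k + 1 : ℕ) : ℝ) + b = (↑k + b) + 1 := by push_cast; ring
        rw [hf]
        simp only [h1, h2, Real.Gamma_add_one (by positivity : (↑k + a : ℝ) ≠ 0),
          Real.Gamma_add_one (by positivity : (↑k + b : ℝ) ≠ 0)]
        rw [div_mul_div_comm]
        ring
      have hkb : (0:ℝ) < ↑k + b := by positivity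
      have h3 : c * (1 / (↑k + 1)) ≤ (b - a) / (↑k + b) := by
        rw [hc, div_mul_div_comm, mul_one]
        apply div_le_div_of_nonneg_left (by linarith) hkb
        nlinarith [Nat.cast_nonneg (α := ℝ) k]
      have hratio : (↑k + a) / (↑k + b) ≤ Real.exp (-c * (1 / (k + 1))) := by
        have h1 : (↑k + a) / (↑k + b) = 1 - (b - a) / (↑k + b) := by
          field_simp
          ring
        have h2 : (1 : ℝ) - (b - a) / (↑k + b) ≤ Real.exp (-((b - a) / (↑k + b))) := by
          have := Real.add_one_le_exp (-((b - a) / (↑k + b)))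
          linarith
        have h4 : -((b - a) / (↑k + b)) ≤ -c * (1 / (k + 1)) := by
          rw [neg_mul]
          exact neg_le_neg h3
        exact h1.le.trans (h2.trans (Real.exp_le_exp.mpr h4))
      calc f (k + 1) = f k * ((↑k + a) / (↑k + b)) := hrec
        _ ≤ (f 0 * Real.exp (-c * ∑ j ∈ Finset.range k, (1 / (j + 1) : ℝ)))
              * Real.exp (-c * (1 / (k + 1))) := by
            apply mul_le_mul ih hratio (by positivity) (by positivity)
        _ = f 0 * Real.exp (-c * ∑ j ∈ Finset.range (k + 1), (1 / (j + 1) : ℝ)) := by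
            rw [mul_assoc, ← Real.exp_add, Finset.sum_range_succ]
            congr 2
            ring
  have hHtop : Filter.Tendsto (fun k : ℕ => ∑ j ∈ Finset.range k, (1 / (j + 1) : ℝ))
      Filter.atTop Filter.atTop := tendsto_sum_range_one_div_nat_succ_atTop
  have hexp : Filter.Tendsto
      (fun k : ℕ => f 0 * Real.exp (-c * ∑ j ∈ Finset.range k, (1 / (j + 1) : ℝ)))
      Filter.atTop (nhds 0) := by
    have h1 : Filter.Tendsto
        (fun k : ℕ => -c * ∑ j ∈ Finset.range k, (1 / (j + 1) : ℝ))
        Filter.atTop Filter.atBot :=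
      hHtop.const_mul_atTop_of_neg (by linarith)
    have := (Real.tendsto_exp_atBot.comp h1).const_mul (f 0)
    simpa using this
  exact squeeze_zero (fun k => (hfpos k).le) key hexp

lemma gamma_telescope_hasSum {a b : ℝ} (ha : 0 < a) (hab : a < b) :
    HasSum (fun k : ℕ => Real.Gamma (k + a) / Real.Gamma (k + b + 1))
      (Real.Gamma a / ((b - a) * Real.Gamma b)) := by
  have hb0 : 0 < b := lt_trans ha hab
  have hba : (0:ℝ) < b - a := by linarith
  set f : ℕ → ℝ := fun k => Real.Gamma (k + a) / Real.Gamma (k + b) with hf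
  set g : ℕ → ℝ := fun k => Real.Gamma (k + a) / Real.Gamma (k + b + 1) with hg
  have hgpos : ∀ k, 0 < g k := fun k =>
    div_pos (Real.Gamma_pos_of_pos (by positivity)) (Real.Gamma_pos_of_pos (by positivity))
  have htel : ∀ k : ℕ, f k - f (k + 1) = (b - a) * g k := by
    intro k
    have h1 : ((k + 1 : ℕ) : ℝ) + a = (↑k + a) + 1 := by push_cast; ring
    have h2 : ((k + 1 : ℕ) : ℝ) + b = (↑k + b) + 1 := by push_cast; ring
    have hΓb := (Real.Gamma_pos_of_pos (by positivity : (0:ℝ) < ↑k + b)).ne'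
    have hkb : ((↑k : ℝ) + b) ≠ 0 := by positivity
    rw [hf, hg]
    simp only [h1, h2, Real.Gamma_add_one (by positivity : (↑k + a : ℝ) ≠ 0),
      Real.Gamma_add_one (by positivity : (↑k + b : ℝ) ≠ 0)]
    field_simp
    ring
  have hdg : HasSum (fun k => (b - a) * g k) (f 0) := by
    rw [hasSum_iff_tendsto_nat_of_nonneg (fun k => by positivity)]
    have hsum : ∀ n : ℕ, ∑ k ∈ Finset.range n, (b - a) * g k = f 0 - f n := by
      intro n
      rw [← Finset.sum_range_sub' f n]
      exact Finset.sum_congr rfl fun k _ => (htel k).symm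
    simp only [hsum]
    have := gamma_ratio_tendsto_zero ha hab
    simpa using (tendsto_const_nhds (x := f 0)).sub this
  have h2 := hdg.mul_left (1 / (b - a))
  have heq : ∀ k, (1 / (b - a)) * ((b - a) * g k) = g k := fun k => by
    field_simp
  rw [funext heq] at h2
  have h0 : f 0 = Real.Gamma a / Real.Gamma b := by simp [hf]
  have hval : (1 / (b - a)) * f 0 = Real.Gamma a / ((b - a) * Real.Gamma b) := by
    rw [h0, one_div, ← div_eq_inv_mul, div_div, mul_comm (Real.Gamma b) (b - a)]
  rwa [hval] at h2

/-- For integers `i ≥ 1` and reals `m' > m > 0`,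
`∑_{n=i+1}^∞ Γ(n+m-1)/(Γ(i)Γ(n-i)) · B(n-i, m'+i) = Γ(m+i)/(Γ(i)(m'-m))`. -/
theorem stmt_0 (i : ℕ) (hi : 1 ≤ i) (m m' : ℝ) (hm : 0 < m) (hmm : m < m') :
    ∑' k : ℕ,
      (Real.Gamma (((i + 1 + k : ℕ) : ℝ) + m - 1) /
          (Real.Gamma i * Real.Gamma ((k + 1 : ℕ) : ℝ))) *
        betaFn ((k + 1 : ℕ) : ℝ) (m' + i)
      = Real.Gamma (m + i) / (Real.Gamma i * (m' - m)) := by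
  have hi0 : (0:ℝ) < i := by exact_mod_cast hi
  have ha : 0 < m + (i:ℝ) := by positivity
  have hab : m + (i:ℝ) < m' + i := by linarith
  have hb : (0:ℝ) < m' + i := lt_trans ha hab
  have hΓi : 0 < Real.Gamma i := Real.Gamma_pos_of_pos hi0
  have hΓb : Real.Gamma (m' + i) ≠ 0 := (Real.Gamma_pos_of_pos hb).ne'
  have hterm : ∀ k : ℕ,
      (Real.Gamma (((i + 1 + k : ℕ) : ℝ) + m - 1) /
          (Real.Gamma i * Real.Gamma ((k + 1 : ℕ) : ℝ))) *
        betaFn ((k + 1 : ℕ) : ℝ) (m' + i)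
      = (Real.Gamma (m' + i) / Real.Gamma i) *
          (Real.Gamma (k + (m + i)) / Real.Gamma (k + (m' + i) + 1)) := by
    intro k
    have e1 : (((i + 1 + k : ℕ) : ℝ)) + m - 1 = (k : ℝ) + (m + i) := by push_cast; ring
    have e2 : ((k + 1 : ℕ) : ℝ) = (k : ℝ) + 1 := by push_cast; ring
    have e3 : (k : ℝ) + 1 + (m' + i) = (k : ℝ) + (m' + i) + 1 := by ring
    have hbeta : betaFn ((k + 1 : ℕ) : ℝ) (m' + i)
        = Real.Gamma ((k:ℝ) + 1) * Real.Gamma (m' + i) / Real.Gamma ((k:ℝ) + (m' + i) + 1) := by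
      rw [betaFn_eq_Gamma _ _ (by positivity) hb, e2, e3]
    rw [e1, hbeta, e2]
    have h1 := (Real.Gamma_pos_of_pos (by positivity : (0:ℝ) < (k:ℝ) + 1)).ne'
    have h2 := (Real.Gamma_pos_of_pos (by positivity : (0:ℝ) < (k:ℝ) + (m' + i) + 1)).ne'
    field_simp
  rw [tsum_congr hterm]
  rw [((gamma_telescope_hasSum ha hab).mul_left
      (Real.Gamma (m' + i) / Real.Gamma i)).tsum_eq]
  have hba : m' + (i:ℝ) - (m + i) = m' - m := by ring
  rw [hba, div_mul_div_comm,
    mul_comm (Real.Gamma (m' + ↑i)) (Real.Gamma (m + ↑i)),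
    show Real.Gamma (i:ℝ) * ((m' - m) * Real.Gamma (m' + ↑i))
        = (Real.Gamma (i:ℝ) * (m' - m)) * Real.Gamma (m' + ↑i) by ring,
    mul_div_mul_right _ _ hΓb]
end

section
/- Under the hypotheses of the homogeneous fragmentation kernel b_{k,n} = ζ(n)·h(k/n) with h continuous nonnegative on [0,1], ∫₀¹ z h(z) dz > 0, normalization ∑_{k=1}^{n−1} k b_{k,n} = n, and any real p > 1 with ∫₀¹ z^p h(z) dz < ∫₀¹ z h(z) dz, one has lim_{n→∞} (1/n^p)·∑_{k=1}^{n−1} k^p·b_{k,n} = ∫₀¹ z^p h(z) dz / ∫₀¹ z h(z) dz < 1. -/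
open Filter intervalIntegral

lemma riemann_sum_tendsto (f : ℝ → ℝ) (hf : ContinuousOn f (Set.Icc 0 1)) :
    Tendsto (fun n : ℕ => (∑ k ∈ Finset.range n, f ((k : ℝ) / n)) / n) atTop
      (nhds (∫ z in (0:ℝ)..1, f z)) := by
  rw [Metric.tendsto_atTop]
  intro ε hε
  obtain ⟨δ, hδ, hunif⟩ := Metric.uniformContinuousOn_iff.1
    (isCompact_Icc.uniformContinuousOn_of_continuous hf) (ε / 2) (by linarith)
  obtain ⟨N, hN⟩ := exists_nat_gt (1 / δ)
  refine ⟨N + 1, fun n hn => ?_⟩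
  have hn1 : 1 ≤ n := le_trans (Nat.le_add_left 1 N) hn
  have hnR : (0:ℝ) < n := by exact_mod_cast hn1
  have hdn : 1 / (n:ℝ) < δ := by
    rw [div_lt_iff₀ hnR]
    have : 1 / δ < (n:ℝ) := lt_of_lt_of_le hN (by exact_mod_cast le_trans (Nat.le_succ N) hn)
    rw [div_lt_iff₀ hδ] at this
    linarith [mul_comm δ (n:ℝ)]
  have hmem : ∀ k : ℕ, k ≤ n → ((k:ℝ)/n) ∈ Set.Icc (0:ℝ) 1 := by
    intro k hk
    constructor
    · positivity
    · rw [div_le_one hnR]; exact_mod_cast hk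
  have hle : ∀ k : ℕ, (k:ℝ)/n ≤ ((k:ℝ)+1)/n := by
    intro k
    gcongr
    linarith
  have hsub : ∀ k : ℕ, k < n → Set.Icc ((k:ℝ)/n) (((k:ℝ)+1)/n) ⊆ Set.Icc (0:ℝ) 1 := by
    intro k hk
    apply Set.Icc_subset_Icc (hmem k hk.le).1
    have := (hmem (k+1) hk).2
    push_cast at this ⊢
    exact this
  have hintg : ∀ k : ℕ, k < n → IntervalIntegrable f MeasureTheory.volume ((k:ℝ)/n) (((k:ℝ)+1)/n) := by
    intro k hk
    apply ContinuousOn.intervalIntegrable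
    rw [Set.uIcc_of_le (hle k)]
    exact hf.mono (hsub k hk)
  have hsplit : (∫ z in (0:ℝ)..1, f z)
      = ∑ k ∈ Finset.range n, ∫ z in ((k:ℝ)/n)..(((k:ℝ)+1)/n), f z := by
    have := intervalIntegral.sum_integral_adjacent_intervals
      (a := fun k : ℕ => (k:ℝ)/n) (n := n) (f := f) (μ := MeasureTheory.volume) ?_
    · push_cast at this
      rw [show ((0:ℝ))/(n:ℝ) = 0 by simp, div_self hnR.ne'] at this
      exact this.symm
    · intro k hk
      have := hintg k hk
      push_cast
      exact this
  -- rewrite each sample as an integral of a constant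
  have hconst : ∀ k : ℕ, f ((k:ℝ)/n) / n
      = ∫ _ in ((k:ℝ)/n)..(((k:ℝ)+1)/n), f ((k:ℝ)/n) := by
    intro k
    rw [intervalIntegral.integral_const]
    have : ((k:ℝ)+1)/n - (k:ℝ)/n = 1/n := by field_simp; ring
    rw [this]
    simp [smul_eq_mul]
    ring
  have hdiff : (∑ k ∈ Finset.range n, f ((k : ℝ) / n)) / n - ∫ z in (0:ℝ)..1, f z
      = ∑ k ∈ Finset.range n,
          ∫ z in ((k:ℝ)/n)..(((k:ℝ)+1)/n), (f ((k:ℝ)/n) - f z) := by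
    rw [hsplit, Finset.sum_div, ← Finset.sum_sub_distrib]
    refine Finset.sum_congr rfl fun k hk => ?_
    rw [hconst k, ← intervalIntegral.integral_sub (intervalIntegrable_const) (hintg k (Finset.mem_range.1 hk))]
  rw [Real.dist_eq, hdiff]
  calc |∑ k ∈ Finset.range n, ∫ z in ((k:ℝ)/n)..(((k:ℝ)+1)/n), (f ((k:ℝ)/n) - f z)|
      ≤ ∑ k ∈ Finset.range n, |∫ z in ((k:ℝ)/n)..(((k:ℝ)+1)/n), (f ((k:ℝ)/n) - f z)| :=
        Finset.abs_sum_le_sum_abs _ _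
    _ ≤ ∑ k ∈ Finset.range n, (ε/2) * (1/n) := by
        refine Finset.sum_le_sum fun k hk => ?_
        have hk' := Finset.mem_range.1 hk
        have hb : ∀ z ∈ Set.Ioc (min ((k:ℝ)/n) (((k:ℝ)+1)/n)) (max ((k:ℝ)/n) (((k:ℝ)+1)/n)),
            ‖f ((k:ℝ)/n) - f z‖ ≤ ε/2 := by
          intro z hz
          rw [min_eq_left (hle k), max_eq_right (hle k)] at hz
          have hzmem : z ∈ Set.Icc (0:ℝ) 1 := hsub k hk' ⟨hz.1.le, hz.2⟩
          have hdist : dist ((k:ℝ)/n) z < δ := by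
            rw [Real.dist_eq, abs_sub_lt_iff]
            constructor
            · linarith [hz.1, hnR]
            · have : z - (k:ℝ)/n ≤ 1/n := by
                have := hz.2
                have h2 : ((k:ℝ)+1)/n - (k:ℝ)/n = 1/n := by field_simp; ring
                linarith
              linarith
          have := hunif _ (hmem k hk'.le) z hzmem hdist
          rw [Real.dist_eq] at this
          exact this.le
        have := intervalIntegral.norm_integral_le_of_norm_le_const hb
        have harith : |((k:ℝ)+1)/n - (k:ℝ)/n| = 1/n := by
          rw [abs_of_nonneg (by linarith [hle k])]
          field_simp; ring
        rw [harith] at this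
        exact this
    _ = n * ((ε/2) * (1/n)) := by rw [Finset.sum_const, Finset.card_range, nsmul_eq_mul]
    _ = ε/2 := by field_simp
    _ < ε := by linarith

/-- Under the homogeneous-kernel hypotheses and for real `p > 1` with
`∫₀¹ z^p h(z) dz < ∫₀¹ z h(z) dz`, one has
`(1/n^p)·∑_{k=1}^{n−1} k^p·b_{k,n} → ∫₀¹ z^p h / ∫₀¹ z h < 1`. -/
theorem stmt_8 (b : ℕ → ℕ → ℝ) (ζ : ℕ → ℝ) (h : ℝ → ℝ) (p : ℝ) (hp : 1 < p)
    (hcont : ContinuousOn h (Set.Icc 0 1))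
    (hnn : ∀ z ∈ Set.Icc (0:ℝ) 1, 0 ≤ h z)
    (hint : 0 < ∫ z in (0:ℝ)..1, z * h z)
    (hintp : (∫ z in (0:ℝ)..1, z ^ p * h z) < ∫ z in (0:ℝ)..1, z * h z)
    (hζ : ∀ n, 2 ≤ n → 0 < ζ n)
    (hb : ∀ n, 2 ≤ n → ∀ k, 1 ≤ k → k ≤ n - 1 → b k n = ζ n * h ((k : ℝ) / n))
    (hnorm : ∀ n, 2 ≤ n → ∑ k ∈ Finset.Icc 1 (n - 1), b k n * (k : ℝ) = n) :
    Tendsto (fun n : ℕ =>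
        (1 / (n : ℝ) ^ p) * ∑ k ∈ Finset.Icc 1 (n - 1), b k n * (k : ℝ) ^ p)
      atTop
      (nhds ((∫ z in (0:ℝ)..1, z ^ p * h z) / ∫ z in (0:ℝ)..1, z * h z)) ∧
    (∫ z in (0:ℝ)..1, z ^ p * h z) / (∫ z in (0:ℝ)..1, z * h z) < 1 := by
  have hp0 : p ≠ 0 := by positivity
  have hcont1 : ContinuousOn (fun z : ℝ => z * h z) (Set.Icc 0 1) :=
    continuousOn_id.mul hcont
  have hcontp : ContinuousOn (fun z : ℝ => z ^ p * h z) (Set.Icc 0 1) := by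
    refine ContinuousOn.mul ?_ hcont
    exact fun x _ => (Real.continuousAt_rpow_const x p (Or.inr (by linarith))).continuousWithinAt
  have hA := riemann_sum_tendsto _ hcont1
  have hB := riemann_sum_tendsto _ hcontp
  refine ⟨?_, (div_lt_one hint).2 hintp⟩
  refine (hB.div hA hint.ne').congr' ?_
  filter_upwards [eventually_ge_atTop 2] with n hn2
  have hc : 0 < ζ n := hζ n hn2
  have hN : (0:ℝ) < n := by exact_mod_cast (by omega : 0 < n)
  have hNp : (0:ℝ) < (n:ℝ) ^ p := Real.rpow_pos_of_pos hN p
  have hrange : ∀ g : ℕ → ℝ, g 0 = 0 →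
      ∑ k ∈ Finset.range n, g k = ∑ k ∈ Finset.Icc 1 (n-1), g k := by
    intro g hg
    have h1 : Finset.range n = Finset.Icc 0 (n-1) := by
      rw [← Nat.Ico_zero_eq_range, ← Finset.Ico_add_one_right_eq_Icc]
      congr 1
      omega
    have h2 : Finset.Ioc 0 (n-1) = Finset.Icc 1 (n-1) := by
      rw [← Finset.Icc_add_one_left_eq_Ioc, zero_add]
    rw [h1, Finset.Icc_eq_cons_Ioc (Nat.zero_le _), Finset.sum_cons, hg, zero_add, h2]
  set S1 : ℝ := ∑ k ∈ Finset.Icc 1 (n-1), (k:ℝ) * h ((k:ℝ)/n) with hS1def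
  set Sp : ℝ := ∑ k ∈ Finset.Icc 1 (n-1), (k:ℝ)^p * h ((k:ℝ)/n) with hSpdef
  have e1 : ∑ k ∈ Finset.range n, ((k:ℝ)/n) * h ((k:ℝ)/n) = S1 / n := by
    rw [hrange _ (by simp), hS1def, Finset.sum_div]
    exact Finset.sum_congr rfl fun k _ => div_mul_eq_mul_div _ _ _
  have e2 : ∑ k ∈ Finset.range n, ((k:ℝ)/n)^p * h ((k:ℝ)/n) = Sp / (n:ℝ)^p := by
    rw [hrange _ (by simp [Real.zero_rpow hp0]), hSpdef, Finset.sum_div]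
    refine Finset.sum_congr rfl fun k _ => ?_
    rw [Real.div_rpow (Nat.cast_nonneg k) (Nat.cast_nonneg n), div_mul_eq_mul_div]
  have e3 : ∑ k ∈ Finset.Icc 1 (n-1), b k n * (k:ℝ)^p = ζ n * Sp := by
    rw [hSpdef, Finset.mul_sum]
    refine Finset.sum_congr rfl fun k hk => ?_
    obtain ⟨hk1, hk2⟩ := Finset.mem_Icc.1 hk
    rw [hb n hn2 k hk1 hk2]; ring
  have e4 : ζ n * S1 = n := by
    have := hnorm n hn2
    rw [← this, hS1def, Finset.mul_sum]
    refine Finset.sum_congr rfl fun k hk => ?_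
    obtain ⟨hk1, hk2⟩ := Finset.mem_Icc.1 hk
    rw [hb n hn2 k hk1 hk2]; ring
  have hS1 : S1 = (n:ℝ) / ζ n := by
    field_simp
    linarith [e4]
  show (∑ k ∈ Finset.range n, ((k:ℝ)/n)^p * h ((k:ℝ)/n)) / n
      / ((∑ k ∈ Finset.range n, ((k:ℝ)/n) * h ((k:ℝ)/n)) / n)
      = (1 / (n:ℝ)^p) * ∑ k ∈ Finset.Icc 1 (n-1), b k n * (k:ℝ)^p
  rw [e1, e2, e3, hS1]
  field_simp
end

section
/- Let m ≥ 1 and suppose (g_n) and (d_n) are nonnegative sequences with d_n/g_n ≥ 1 + (m'−1)/n for all large n, where m' > m. Define Γ_n = g_n·((1+1/n)^m − 1) − d_n·(1 − (1−1/n)^m). Then Γ_n ≤ 0 for all sufficiently large n; in particular limsup_{n→∞} Γ_n ≤ 0. -/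
open Filter Set
open scoped Topology

private lemma slope_aux (c p : ℝ) :
    Tendsto (fun x : ℝ => ((1 + c * x) ^ p - 1) / x) (𝓝[≠] (0:ℝ)) (𝓝 (c * p)) := by
  have hb : HasDerivAt (fun x : ℝ => 1 + c * x) c 0 := by
    simpa using ((hasDerivAt_id (0:ℝ)).const_mul c).const_add 1
  have h1 : HasDerivAt (fun x : ℝ => (1 + c * x) ^ p) (c * p) 0 := by
    have := hb.rpow_const (p := p) (Or.inl (by norm_num))
    simpa [Real.one_rpow] using this
  have h2 := hasDerivAt_iff_tendsto_slope.mp h1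
  refine h2.congr' ?_
  filter_upwards [self_mem_nhdsWithin] with x hx
  simp [slope_def_field, Real.one_rpow]

private lemma slope_aux' (c p : ℝ) :
    Tendsto (fun x : ℝ => ((1 + c * x) ^ p - 1) / x) (𝓝[>] (0:ℝ)) (𝓝 (c * p)) :=
  (slope_aux c p).mono_left (nhdsWithin_mono _ (fun x hx => ne_of_gt hx))

private lemma key_ineq (m m' : ℝ) (hm : 1 ≤ m) (hmm : m < m') :
    ∀ᶠ x : ℝ in 𝓝[>] (0:ℝ),
      (1 + x) ^ m - 1 ≤ (1 + (m' - 1) * x) * (1 - (1 - x) ^ m) := by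
  -- L'Hopital for A(x)/x² where A(x) = (1+x)^m + (1-x)^m - 2
  have hA : Tendsto (fun x : ℝ => ((1 + x) ^ m + (1 - x) ^ m - 2) / (x ^ 2))
      (𝓝[>] (0:ℝ)) (𝓝 (m * (m - 1))) := by
    have hder : ∀ x ∈ Ioo (0:ℝ) 1,
        HasDerivAt (fun x : ℝ => (1 + x) ^ m + (1 - x) ^ m - 2)
          (m * (1 + x) ^ (m - 1) - m * (1 - x) ^ (m - 1)) x := by
      intro x hx
      have h1 : HasDerivAt (fun x : ℝ => (1 + x) ^ m) (m * (1 + x) ^ (m - 1)) x := by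
        have hb : HasDerivAt (fun x : ℝ => 1 + x) 1 x := by
          simpa using (hasDerivAt_id x).const_add 1
        have := hb.rpow_const (p := m) (Or.inl (by nlinarith [hx.1]))
        simpa using this
      have h2 : HasDerivAt (fun x : ℝ => (1 - x) ^ m) (-(m * (1 - x) ^ (m - 1))) x := by
        have hb : HasDerivAt (fun x : ℝ => 1 - x) (-1) x := by
          simpa using (hasDerivAt_id x).const_sub 1
        have := hb.rpow_const (p := m) (Or.inl (by nlinarith [hx.2]))
        convert this using 1
        ring
      simpa [← sub_eq_add_neg] using (h1.add h2).sub_const 2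
    have hgder : ∀ x ∈ Ioo (0:ℝ) 1, HasDerivAt (fun x : ℝ => x ^ 2) (2 * x) x := by
      intro x _
      simpa [mul_comm] using hasDerivAt_pow 2 x
    refine HasDerivAt.lhopital_zero_right_on_Ioo one_pos hder hgder
      (fun x hx => ne_of_gt (by linarith [hx.1])) ?_ ?_ ?_
    · -- A → 0
      have h0 : HasDerivAt (fun x : ℝ => (1 + x) ^ m + (1 - x) ^ m - 2)
          (m * (1 + 0) ^ (m - 1) - m * (1 - 0) ^ (m - 1)) 0 := by
        have h1 : HasDerivAt (fun x : ℝ => (1 + x) ^ m) (m * (1 + (0:ℝ)) ^ (m - 1)) 0 := by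
          have hb : HasDerivAt (fun x : ℝ => 1 + x) 1 (0:ℝ) := by
            simpa using (hasDerivAt_id (0:ℝ)).const_add 1
          have := hb.rpow_const (p := m) (Or.inl (by norm_num))
          simpa using this
        have h2 : HasDerivAt (fun x : ℝ => (1 - x) ^ m) (-(m * (1 - (0:ℝ)) ^ (m - 1))) 0 := by
          have hb : HasDerivAt (fun x : ℝ => 1 - x) (-1) (0:ℝ) := by
            simpa using (hasDerivAt_id (0:ℝ)).const_sub 1
          have := hb.rpow_const (p := m) (Or.inl (by norm_num))
          convert this using 1
          ring
        simpa using (h1.add h2).sub_const 2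
      have hc := h0.continuousAt.tendsto
      have : ((1:ℝ) + 0) ^ m + (1 - 0) ^ m - 2 = 0 := by
        norm_num
      rw [this] at hc
      exact hc.mono_left nhdsWithin_le_nhds
    · have : Tendsto (fun x : ℝ => x ^ 2) (𝓝 (0:ℝ)) (𝓝 ((0:ℝ) ^ 2)) :=
        (continuous_pow 2).tendsto 0
      simpa using this.mono_left nhdsWithin_le_nhds
    · -- derivative quotient limit
      have t1 := slope_aux' 1 (m - 1)
      have t2 := slope_aux' (-1) (m - 1)
      have := ((t1.sub t2).const_mul (m / 2))
      have heq : Tendsto (fun x : ℝ =>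
          m / 2 * (((1 + 1 * x) ^ (m - 1) - 1) / x - ((1 + (-1) * x) ^ (m - 1) - 1) / x))
          (𝓝[>] (0:ℝ)) (𝓝 (m * (m - 1))) := by
        convert this using 2
        ring
      refine heq.congr' ?_
      filter_upwards [self_mem_nhdsWithin] with x hx
      have hx0 : (x:ℝ) ≠ 0 := ne_of_gt hx
      have e1 : (1:ℝ) + 1 * x = 1 + x := by ring
      have e2 : (1:ℝ) + (-1) * x = 1 - x := by ring
      rw [e1, e2]
      field_simp
      ring
  -- B(x)/x → m
  have hB : Tendsto (fun x : ℝ => (1 - (1 - x) ^ m) / x) (𝓝[>] (0:ℝ)) (𝓝 m) := by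
    have t := slope_aux' (-1) m
    have := t.neg
    have heq : Tendsto (fun x : ℝ => -(((1 + (-1) * x) ^ m - 1) / x)) (𝓝[>] (0:ℝ)) (𝓝 m) := by
      convert this using 2
      ring
    refine heq.congr ?_
    intro x
    have : (1:ℝ) + (-1) * x = 1 - x := by ring
    rw [this]
    ring
  -- q(x) → m * (m' - m) > 0
  have hq : Tendsto (fun x : ℝ =>
      (m' - 1) * ((1 - (1 - x) ^ m) / x) - ((1 + x) ^ m + (1 - x) ^ m - 2) / (x ^ 2))
      (𝓝[>] (0:ℝ)) (𝓝 (m * (m' - m))) := by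
    have := (hB.const_mul (m' - 1)).sub hA
    convert this using 2
    ring
  have hpos : (0:ℝ) < m * (m' - m) := by nlinarith
  have hev := hq.eventually (eventually_gt_nhds hpos)
  filter_upwards [hev, self_mem_nhdsWithin] with x hx hx0
  have hx0' : (0:ℝ) < x := hx0
  have hx2 : (0:ℝ) < x ^ 2 := by positivity
  have h2 : 0 < ((m' - 1) * ((1 - (1 - x) ^ m) / x)
      - ((1 + x) ^ m + (1 - x) ^ m - 2) / (x ^ 2)) * x ^ 2 := mul_pos hx hx2
  have hxne : x ≠ 0 := ne_of_gt hx0'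
  field_simp at h2
  nlinarith [h2]

/-- If `m' > m ≥ 1`, `g_n > 0`, `d_n ≥ 0`, and
`d_n/g_n ≥ 1 + (m'−1)/n` for all large `n`, then
`Γ_n = g_n((1+1/n)^m − 1) − d_n(1 − (1−1/n)^m) ≤ 0` for all large `n`;
in particular `limsup Γ_n ≤ 0`. -/
theorem stmt_11 (m m' : ℝ) (hm : 1 ≤ m) (hmm : m < m') (g d : ℕ → ℝ)
    (hg : ∀ n, 0 < g n) (hd : ∀ n, 0 ≤ d n)
    (hratio : ∀ᶠ n : ℕ in atTop, d n / g n ≥ 1 + (m' - 1) / n) :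
    (∀ᶠ n : ℕ in atTop,
        g n * ((1 + 1 / (n : ℝ)) ^ m - 1) - d n * (1 - (1 - 1 / (n : ℝ)) ^ m) ≤ 0) ∧
    Filter.limsup
        (fun n : ℕ =>
          g n * ((1 + 1 / (n : ℝ)) ^ m - 1) - d n * (1 - (1 - 1 / (n : ℝ)) ^ m))
        atTop ≤ 0 := by
  have hseq : Tendsto (fun n : ℕ => 1 / (n : ℝ)) atTop (𝓝[>] (0:ℝ)) := by
    refine tendsto_nhdsWithin_of_tendsto_nhds_of_eventually_within _
      tendsto_one_div_atTop_nhds_zero_nat ?_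
    filter_upwards [eventually_ge_atTop 1] with n hn
    have : (0:ℝ) < n := by exact_mod_cast hn
    exact mem_Ioi.mpr (by positivity)
  have hkey := hseq.eventually (key_ineq m m' hm hmm)
  have hmain : ∀ᶠ n : ℕ in atTop,
      g n * ((1 + 1 / (n : ℝ)) ^ m - 1) - d n * (1 - (1 - 1 / (n : ℝ)) ^ m) ≤ 0 := by
    filter_upwards [hkey, hratio, eventually_ge_atTop 1] with n hk hr hn
    set x : ℝ := 1 / (n : ℝ) with hxdef
    have hn1 : (1:ℝ) ≤ (n : ℝ) := by exact_mod_cast hn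
    have hx0 : 0 < x := by positivity
    have hx1 : x ≤ 1 := by
      rw [hxdef, div_le_one (by linarith)]
      exact hn1
    have hu : 0 ≤ 1 - (1 - x) ^ m := by
      have : (1 - x) ^ m ≤ 1 :=
        Real.rpow_le_one (by linarith) (by linarith) (by linarith)
      linarith
    have hdg : g n * (1 + (m' - 1) * x) ≤ d n := by
      have : (1 + (m' - 1) / (n:ℝ)) * g n ≤ d n := by
        rw [← le_div_iff₀ (hg n)]
        exact hr
      have hx : (m' - 1) * x = (m' - 1) / (n:ℝ) := by rw [hxdef]; ring
      rw [hx]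
      linarith [this]
    have step1 : g n * ((1 + x) ^ m - 1) ≤ g n * ((1 + (m' - 1) * x) * (1 - (1 - x) ^ m)) :=
      mul_le_mul_of_nonneg_left hk (hg n).le
    have step2 : g n * (1 + (m' - 1) * x) * (1 - (1 - x) ^ m) ≤ d n * (1 - (1 - x) ^ m) :=
      mul_le_mul_of_nonneg_right hdg hu
    nlinarith [step1, step2]
  refine ⟨hmain, ?_⟩
  rw [limsup_eq]
  by_cases hb : BddBelow {a : ℝ | ∀ᶠ n : ℕ in atTop,
      g n * ((1 + 1 / (n : ℝ)) ^ m - 1) - d n * (1 - (1 - 1 / (n : ℝ)) ^ m) ≤ a}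
  · exact csInf_le hb hmain
  · rw [Real.sInf_of_not_bddBelow hb]
end

section
/- Consider the formal eigenvalue problem of the growth-fragmentation system with g_n = r·n for r > 0 and d_n = 0: λ f₁ = −r f₁ + ∑_{i=2}^∞ a_i b_{1,i} f_i and λ f_n = r(n−1) f_{n−1} − (a_n + rn) f_n + ∑_{i=n+1}^∞ a_i b_{n,i} f_i for n ≥ 2, where ∑_{k=1}^{i−1} k·b_{k,i} = i for all i ≥ 2 and b_{k,i} ≥ 0, a_i ≥ 0. If (f_n) is a solution with ∑ n|f_n| < ∞, ∑ n·a_n|f_n| < ∞, and all rearrangements of double series are absolutely convergent, then λ·∑_{n=1}^∞ n f_n = r·∑_{n=1}^∞ n f_n. Hence if ∑ n f_n ≠ 0 then λ = r. -/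
set_option maxHeartbeats 1000000 in
/-- For the eigenvalue problem of the growth-fragmentation system with
`g_n = r n`, `d_n = 0`: if `(f_n)` solves
`λ f₁ = −r f₁ + ∑_{i≥2} a_i b_{1,i} f_i` and
`λ f_n = r(n−1) f_{n−1} − (a_n + r n) f_n + ∑_{i>n} a_i b_{n,i} f_i` (`n ≥ 2`),
with mass normalization `∑_{k=1}^{i−1} k b_{k,i} = i`, `a, b ≥ 0`, and the summability
assumptions listed, then `λ ∑ n f_n = r ∑ n f_n`; hence `∑ n f_n ≠ 0 → λ = r`. -/
theorem stmt_15 (r lam : ℝ) (hr : 0 < r) (a : ℕ → ℝ) (b : ℕ → ℕ → ℝ) (f : ℕ → ℝ)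
    (ha : ∀ i, 0 ≤ a i) (hbnn : ∀ k i, 0 ≤ b k i)
    (hmass : ∀ i, 2 ≤ i → ∑ k ∈ Finset.Icc 1 (i - 1), b k i * (k : ℝ) = i)
    (hsum1 : Summable (fun n : ℕ => (n : ℝ) * |f n|))
    (hsum2 : Summable (fun n : ℕ => (n : ℝ) * a n * |f n|))
    (hsum3 : Summable (fun p : ℕ × ℕ => (p.1 : ℝ) * a p.2 * b p.1 p.2 * |f p.2|))
    (heq1 : lam * f 1 = -r * f 1 + ∑' i : ℕ, a (i + 2) * b 1 (i + 2) * f (i + 2))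
    (heqn : ∀ n, 2 ≤ n →
      lam * f n = r * ((n : ℝ) - 1) * f (n - 1) - (a n + r * n) * f n +
        ∑' i : ℕ, a (n + 1 + i) * b n (n + 1 + i) * f (n + 1 + i)) :
    lam * ∑' n : ℕ, (n : ℝ) * f n = r * ∑' n : ℕ, (n : ℝ) * f n ∧
      ((∑' n : ℕ, (n : ℝ) * f n) ≠ 0 → lam = r) := by
  classical
  set S : ℝ := ∑' n : ℕ, (n : ℝ) * f n with hSdef
  have hS : Summable (fun n : ℕ => (n : ℝ) * f n) :=
    summable_abs_iff.mp (hsum1.congr fun n => by rw [abs_mul, Nat.abs_cast])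
  -- the double array
  set G : ℕ → ℕ → ℝ := fun n i =>
    if 1 ≤ n ∧ n < i then (n : ℝ) * (a i * b n i * f i) else 0 with hGdef
  have hGbound : ∀ n i, |G n i| ≤ (n : ℝ) * a i * b n i * |f i| := by
    intro n i
    simp only [hGdef]
    split_ifs with h
    · rw [abs_mul, abs_mul, abs_mul, Nat.abs_cast, abs_of_nonneg (ha i),
        abs_of_nonneg (hbnn n i)]
      apply le_of_eq; ring
    · simp only [abs_zero]
      exact mul_nonneg (mul_nonneg (mul_nonneg (Nat.cast_nonneg n) (ha i)) (hbnn n i))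
        (abs_nonneg _)
  have hGabs : Summable (fun p : ℕ × ℕ => |G p.1 p.2|) :=
    Summable.of_nonneg_of_le (fun p => abs_nonneg _) (fun p => hGbound p.1 p.2) hsum3
  have hGu : Summable (fun p : ℕ × ℕ => G p.1 p.2) := summable_abs_iff.mp hGabs
  have hGslice : ∀ n, Summable (G n) := fun n => hGu.prod_factor n
  have hGsliceAbs : ∀ n, Summable (fun i => |G n i|) := fun n => hGabs.prod_factor n
  have hGcol : ∀ i, Summable (fun n => G n i) := by
    intro i
    apply summable_of_ne_finset_zero (s := Finset.range i)
    intro n hn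
    simp only [Finset.mem_range, not_lt] at hn
    simp only [hGdef, if_neg (by omega : ¬(1 ≤ n ∧ n < i))]
  -- the marginal sums
  set Fr : ℕ → ℝ := fun n => ∑' i, G n i with hFrdef
  have hM : Summable (fun n : ℕ => ∑' i, (n : ℝ) * a i * b n i * |f i|) :=
    ((summable_prod_of_nonneg (fun p =>
      mul_nonneg (mul_nonneg (mul_nonneg (Nat.cast_nonneg p.1) (ha p.2)) (hbnn p.1 p.2))
        (abs_nonneg _))).mp hsum3).2
  have hFrabs : Summable (fun n => |Fr n|) := by
    apply Summable.of_nonneg_of_le (fun n => abs_nonneg _) _ hM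
    intro n
    calc |Fr n| ≤ ∑' i, |G n i| := by
          simpa using norm_tsum_le_tsum_norm (f := G n) (by simpa using hGsliceAbs n)
      _ ≤ ∑' i, (n : ℝ) * a i * b n i * |f i| :=
          Summable.tsum_le_tsum (fun i => hGbound n i) (hGsliceAbs n) (hsum3.prod_factor n)
  have hFrSummable : Summable Fr := summable_abs_iff.mp hFrabs
  -- the E sequence
  set E : ℕ → ℝ := fun i => if 2 ≤ i then (i : ℝ) * (a i * f i) else 0 with hEdef
  have hEsum : Summable E := by
    apply summable_abs_iff.mp
    apply Summable.of_nonneg_of_le (fun n => abs_nonneg _) _ hsum2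
    intro i
    simp only [hEdef]
    split_ifs with h
    · rw [abs_mul, abs_mul, Nat.abs_cast, abs_of_nonneg (ha i)]
      apply le_of_eq; ring
    · simp only [abs_zero]
      exact mul_nonneg (mul_nonneg (Nat.cast_nonneg i) (ha i)) (abs_nonneg _)
  -- column sums equal E
  have hcol : ∀ i, (∑' n, G n i) = E i := by
    intro i
    rw [tsum_eq_sum (s := Finset.Icc 1 (i - 1)) ?_]
    · by_cases hi : 2 ≤ i
      · have : ∀ n ∈ Finset.Icc 1 (i - 1), G n i = (a i * f i) * (b n i * (n : ℝ)) := by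
          intro n hn
          simp only [Finset.mem_Icc] at hn
          simp only [hGdef, if_pos (by omega : 1 ≤ n ∧ n < i)]
          ring
        rw [Finset.sum_congr rfl this, ← Finset.mul_sum, hmass i hi, hEdef]
        simp only [if_pos hi]; ring
      · have h1 : i - 1 = 0 := by omega
        simp only [hEdef, if_neg hi, h1]
        simp
    · intro n hn
      simp only [Finset.mem_Icc, not_and_or, not_le] at hn
      simp only [hGdef]
      apply if_neg
      omega
  -- row sums via reindexing
  have hFreq : ∀ n : ℕ, 1 ≤ n →
      Fr n = (n : ℝ) * ∑' i : ℕ, a (n + 1 + i) * b n (n + 1 + i) * f (n + 1 + i) := by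
    intro n hn
    have h0 : ∑ i ∈ Finset.range (n + 1), G n i = 0 := by
      apply Finset.sum_eq_zero
      intro i hi
      simp only [Finset.mem_range] at hi
      simp only [hGdef]
      exact if_neg (by omega)
    have h2 := Summable.sum_add_tsum_nat_add (f := G n) (n + 1) (hGslice n)
    rw [h0, zero_add] at h2
    have h3 : ∀ i : ℕ, G n (i + (n + 1)) =
        (n : ℝ) * (a (n + 1 + i) * b n (n + 1 + i) * f (n + 1 + i)) := by
      intro i
      have hidx : i + (n + 1) = n + 1 + i := by omega
      simp only [hGdef, hidx, if_pos (by omega : 1 ≤ n ∧ n < n + 1 + i)]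
    calc Fr n = ∑' i, G n (i + (n + 1)) := h2.symm
      _ = ∑' i, (n : ℝ) * (a (n + 1 + i) * b n (n + 1 + i) * f (n + 1 + i)) :=
          tsum_congr h3
      _ = (n : ℝ) * ∑' i, a (n + 1 + i) * b n (n + 1 + i) * f (n + 1 + i) :=
          tsum_mul_left
  -- Fubini: ∑ Fr = ∑ E
  have hFub : ∑' n, Fr n = ∑' i, E i := by
    have := Summable.tsum_comm' (f := G) hGu hGslice hGcol
    calc ∑' n, Fr n = ∑' n, ∑' i, G n i := rfl
      _ = ∑' i, ∑' n, G n i := this.symm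
      _ = ∑' i, E i := tsum_congr hcol
  -- the telescoping sequence
  set T : ℕ → ℝ := fun n => r * ((n : ℝ) * (((n : ℝ) - 1) * f (n - 1) - (n : ℝ) * f n))
    with hTdef
  -- key pointwise identity
  have hkey : ∀ n : ℕ, (n : ℝ) * (lam * f n) = T n - E n + Fr n := by
    intro n
    match n with
    | 0 =>
      have hFr0 : Fr 0 = 0 := by
        simp only [hFrdef]
        have : ∀ i, G 0 i = 0 := fun i => if_neg (by omega)
        simp [this]
      simp [hTdef, hEdef, hFr0]
    | 1 =>
      have hFr1 := hFreq 1 le_rfl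
      have hidx : ∀ i : ℕ, 1 + 1 + i = i + 2 := fun i => by omega
      simp only [hidx] at hFr1
      have hE1 : E 1 = 0 := if_neg (by omega)
      simp only [hTdef, hE1, hFr1]
      rw [heq1]
      push_cast
      ring
    | (m + 2) =>
      have hn2 : 2 ≤ m + 2 := by omega
      have hFrn := hFreq (m + 2) (by omega)
      have hEn : E (m + 2) = ((m + 2 : ℕ) : ℝ) * (a (m + 2) * f (m + 2)) := if_pos hn2
      have heq := heqn (m + 2) hn2
      have hsub : (m + 2) - 1 = m + 1 := by omega
      simp only [hTdef, hEn, hFrn, hsub]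
      rw [heq]
      push_cast
      ring
  -- summability of T and its tsum
  have hH : Summable (fun n : ℕ => (n : ℝ) * (lam * f n)) :=
    (hS.mul_left lam).congr fun n => by ring
  have hT : Summable T :=
    ((hH.add hEsum).sub hFrSummable).congr fun n => by
      have := hkey n; linarith
  have hTsum : ∑' n, T n = lam * S := by
    have h1 : ∀ n, T n = ((n : ℝ) * (lam * f n) + E n) - Fr n := by
      intro n; have := hkey n; linarith
    rw [tsum_congr h1, Summable.tsum_sub (hH.add hEsum) hFrSummable,
      Summable.tsum_add hH hEsum, hFub]
    have : ∑' n : ℕ, (n : ℝ) * (lam * f n) = lam * S := by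
      rw [hSdef, ← tsum_mul_left]
      exact tsum_congr fun n => by ring
    rw [this]; ring
  -- partial sums of T telescope
  have hpart : ∀ N : ℕ, ∑ n ∈ Finset.range (N + 1), T n =
      r * (∑ n ∈ Finset.range (N + 1), (n : ℝ) * f n) - r * (N : ℝ) * ((N : ℝ) + 1) * f N := by
    intro N
    induction N with
    | zero => simp [hTdef]
    | succ m ih =>
      have hrs : ∑ n ∈ Finset.range (m + 1 + 1), (n : ℝ) * f n =
          ∑ n ∈ Finset.range (m + 1), (n : ℝ) * f n + ((m + 1 : ℕ) : ℝ) * f (m + 1) :=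
        Finset.sum_range_succ _ _
      rw [Finset.sum_range_succ, ih, hrs]
      simp only [hTdef]
      have hsub : (m + 1) - 1 = m := by omega
      rw [hsub]
      push_cast
      ring
  -- limits
  have hTtend : Filter.Tendsto (fun N => ∑ n ∈ Finset.range (N + 1), T n)
      Filter.atTop (nhds (lam * S)) := by
    have := (hTsum ▸ hT.hasSum).tendsto_sum_nat
    exact this.comp (Filter.tendsto_add_atTop_nat 1)
  have hStend : Filter.Tendsto (fun N => ∑ n ∈ Finset.range (N + 1), (n : ℝ) * f n)
      Filter.atTop (nhds S) := by
    have := hS.hasSum.tendsto_sum_nat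
    exact this.comp (Filter.tendsto_add_atTop_nat 1)
  set v : ℕ → ℝ := fun N => r * (N : ℝ) * ((N : ℝ) + 1) * f N with hvdef
  have hvtend : Filter.Tendsto v Filter.atTop (nhds (r * S - lam * S)) := by
    have h1 : ∀ N, v N = r * (∑ n ∈ Finset.range (N + 1), (n : ℝ) * f n) -
        ∑ n ∈ Finset.range (N + 1), T n := by
      intro N; rw [hpart N]; ring
    exact Filter.Tendsto.congr (fun N => (h1 N).symm) ((hStend.const_mul r).sub hTtend)
  -- the limit must be zero
  have hL0 : r * S - lam * S = 0 := by
    by_contra hL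
    set L : ℝ := r * S - lam * S with hLdef
    have hev : ∀ᶠ N in Filter.atTop, |v N - L| < |L| / 2 := by
      have := hvtend
      rw [Metric.tendsto_atTop] at this
      obtain ⟨N₀, hN₀⟩ := this (|L| / 2) (by positivity)
      filter_upwards [Filter.eventually_ge_atTop N₀] with N hN
      simpa [Real.dist_eq] using hN₀ N hN
    rw [Filter.eventually_atTop] at hev
    obtain ⟨N₁, hN₁⟩ := hev
    set N₀ := max N₁ 1 with hN₀def
    have hlow : ∀ k : ℕ, |L| / (2 * r) / ((k : ℝ) + (N₀ : ℝ) + 1) ≤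
        ((k + N₀ : ℕ) : ℝ) * |f (k + N₀)| := by
      intro k
      set m := k + N₀ with hmdef
      have hm1 : 1 ≤ m := le_trans (le_max_right N₁ 1) (Nat.le_add_left N₀ k)
      have hvm : |L| / 2 ≤ |v m| := by
        have h := hN₁ m (le_trans (le_max_left N₁ 1) (Nat.le_add_left N₀ k))
        have h2 : |L| - |v m| ≤ |v m - L| := by
          have h3 := abs_sub_abs_le_abs_sub L (v m)
          rwa [abs_sub_comm L (v m)] at h3
        linarith
      have hvabs : |v m| = r * ((m : ℝ) + 1) * ((m : ℝ) * |f m|) := by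
        simp only [hvdef]
        rw [abs_mul, abs_mul, abs_mul]
        rw [abs_of_nonneg hr.le, Nat.abs_cast, abs_of_nonneg (by positivity : (0:ℝ) ≤ (m:ℝ)+1)]
        ring
      rw [hvabs] at hvm
      have hmpos : (0 : ℝ) < (m : ℝ) + 1 := by positivity
      rw [div_div, div_le_iff₀ (by positivity)]
      have hcast : (k : ℝ) + (N₀ : ℝ) + 1 = (m : ℝ) + 1 := by
        simp only [hmdef]; push_cast; ring
      rw [hcast]
      calc |L| ≤ 2 * (r * ((m : ℝ) + 1) * ((m : ℝ) * |f m|)) := by linarith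
        _ = (m : ℝ) * |f m| * (2 * r * ((m : ℝ) + 1)) := by ring
    have hshift : Summable (fun k : ℕ => ((k + N₀ : ℕ) : ℝ) * |f (k + N₀)|) :=
      (summable_nat_add_iff N₀).mpr hsum1
    have hLr : (0 : ℝ) < |L| / (2 * r) := by
      apply div_pos (abs_pos.mpr hL); positivity
    have hsumc : Summable (fun k : ℕ => |L| / (2 * r) / ((k : ℝ) + (N₀ : ℝ) + 1)) :=
      Summable.of_nonneg_of_le
        (fun k => div_nonneg hLr.le (by positivity)) hlow hshift
    have hsuminv : Summable (fun k : ℕ => 1 / ((k + (N₀ + 1) : ℕ) : ℝ)) := by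
      have hc : (|L| / (2 * r)) ≠ 0 := ne_of_gt hLr
      apply (hsumc.mul_left (|L| / (2 * r))⁻¹).congr
      intro k
      have hcast : ((k + (N₀ + 1) : ℕ) : ℝ) = (k : ℝ) + (N₀ : ℝ) + 1 := by push_cast; ring
      rw [hcast, ← mul_div_assoc, inv_mul_cancel₀ hc]
    have : Summable (fun n : ℕ => 1 / (n : ℝ)) :=
      (summable_nat_add_iff (N₀ + 1)).mp hsuminv
    exact Real.not_summable_one_div_natCast this
  constructor
  · linarith
  · intro hSne
    have : (lam - r) * S = 0 := by linarith
    rcases mul_eq_zero.mp this with h | h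
    · linarith
    · exact absurd h hSne
end

section
/- Let m ≥ 1 real and let θ_n > 0, g_n ≥ 0 satisfy g_n ≤ θ_n for all n (e.g. θ_n = g_n + a_n + d_n with a_n, d_n ≥ 0). For λ > 0, i ≥ 1, define S = ∑_{n=i}^∞ (Γ(n+m)/Γ(n)) · (∏_{j=i}^{n−1} g_j/(λ+θ_j) − ∏_{j=i}^{n} g_j/(λ+θ_j)), assuming the limit lim_{N→∞} (Γ(N+m)/Γ(N))·∏_{j=i}^{N} g_j/(λ+θ_j) = 0 and that all series converge. Then ∑_{n=i}^∞ (Γ(n+m)/Γ(n))·(1/(λ+θ_n))·∏_{j=i}^{n−1} g_j/(λ+θ_j) ≤ S/λ. -/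
open Filter

/-- Let `m ≥ 1`, `θ_n > 0`, `0 ≤ g_n ≤ θ_n`, `λ > 0`, `i ≥ 1`. Assume
`Γ(N+m)/Γ(N)·∏_{j=i}^{N} g_j/(λ+θ_j) → 0` and the relevant series converge. Then
`∑_{n=i}^∞ (Γ(n+m)/Γ(n))·(1/(λ+θ_n))·∏_{j=i}^{n−1} g_j/(λ+θ_j) ≤ S/λ`, where
`S = ∑_{n=i}^∞ (Γ(n+m)/Γ(n))·(∏_{j=i}^{n−1} g_j/(λ+θ_j) − ∏_{j=i}^{n} g_j/(λ+θ_j))`. -/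
theorem stmt_18 (m lam : ℝ) (hm : 1 ≤ m) (hlam : 0 < lam)
    (θ g : ℕ → ℝ) (hθ : ∀ n, 0 < θ n) (hg0 : ∀ n, 0 ≤ g n) (hgθ : ∀ n, g n ≤ θ n)
    (i : ℕ) (hi : 1 ≤ i)
    (hlim : Tendsto (fun N : ℕ =>
        Real.Gamma ((N : ℝ) + m) / Real.Gamma N *
          ∏ j ∈ Finset.Icc i N, g j / (lam + θ j)) atTop (nhds 0))
    (hS1 : Summable (fun k : ℕ =>
        Real.Gamma (((i + k : ℕ) : ℝ) + m) / Real.Gamma ((i + k : ℕ) : ℝ) *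
          (1 / (lam + θ (i + k))) * ∏ j ∈ Finset.Ico i (i + k), g j / (lam + θ j)))
    (hS2 : Summable (fun k : ℕ =>
        Real.Gamma (((i + k : ℕ) : ℝ) + m) / Real.Gamma ((i + k : ℕ) : ℝ) *
          ((∏ j ∈ Finset.Ico i (i + k), g j / (lam + θ j)) -
            ∏ j ∈ Finset.Ico i (i + k + 1), g j / (lam + θ j)))) :
    (∑' k : ℕ,
        Real.Gamma (((i + k : ℕ) : ℝ) + m) / Real.Gamma ((i + k : ℕ) : ℝ) *
          (1 / (lam + θ (i + k))) * ∏ j ∈ Finset.Ico i (i + k), g j / (lam + θ j))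
      ≤ (∑' k : ℕ,
          Real.Gamma (((i + k : ℕ) : ℝ) + m) / Real.Gamma ((i + k : ℕ) : ℝ) *
            ((∏ j ∈ Finset.Ico i (i + k), g j / (lam + θ j)) -
              ∏ j ∈ Finset.Ico i (i + k + 1), g j / (lam + θ j))) / lam := by
  rw [div_eq_inv_mul, ← tsum_mul_left]
  refine Summable.tsum_le_tsum (fun k => ?_) hS1 (hS2.mul_left _)
  set n := i + k with hn
  have hnpos : (0:ℝ) < (n:ℝ) := by
    have : 1 ≤ n := le_trans hi (Nat.le_add_right i k)
    exact_mod_cast this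
  have hC : 0 ≤ Real.Gamma ((n:ℝ) + m) / Real.Gamma n :=
    div_nonneg (Real.Gamma_pos_of_pos (by linarith)).le (Real.Gamma_pos_of_pos hnpos).le
  have hP : 0 ≤ ∏ j ∈ Finset.Ico i n, g j / (lam + θ j) :=
    Finset.prod_nonneg fun j _ => div_nonneg (hg0 j) (by have := hθ j; linarith)
  have hsplit : ∏ j ∈ Finset.Ico i (n + 1), g j / (lam + θ j)
      = (∏ j ∈ Finset.Ico i n, g j / (lam + θ j)) * (g n / (lam + θ n)) :=
    Finset.prod_Ico_succ_top (Nat.le_add_right i k) _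
  set P := ∏ j ∈ Finset.Ico i n, g j / (lam + θ j)
  set C := Real.Gamma ((n:ℝ) + m) / Real.Gamma n
  rw [hsplit]
  have hθn := hθ n
  have hden : (0:ℝ) < lam + θ n := by linarith
  have key : (1 / (lam + θ n)) * P ≤ lam⁻¹ * (P - P * (g n / (lam + θ n))) := by
    rw [mul_comm lam⁻¹, ← div_eq_mul_inv, le_div_iff₀ hlam]
    have h1 : P * (g n / (lam + θ n)) ≤ P * (θ n / (lam + θ n)) :=
      by gcongr; exact hgθ n
    have h2 : P - P * (θ n / (lam + θ n)) = 1 / (lam + θ n) * P * lam := by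
      field_simp; ring
    linarith
  calc C * (1 / (lam + θ n)) * P = C * ((1 / (lam + θ n)) * P) := by ring
    _ ≤ C * (lam⁻¹ * (P - P * (g n / (lam + θ n)))) :=
        mul_le_mul_of_nonneg_left key hC
    _ = lam⁻¹ * (C * (P - P * (g n / (lam + θ n)))) := by ring
end

section
/- Let m' > m ≥ 1 and let i ≥ 1 be an integer. Then Γ(i+m)/Γ(i) + m·∑_{n=i+1}^∞ Γ(n+m−1)·Γ(i+m')/(Γ(i)·Γ(n+m')) = Γ(i+m)/Γ(i) · (1 + m/(m'−m)) = (m'/(m'−m))·Γ(i+m)/Γ(i). -/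
open Real Filter Finset

lemma gamma_ratio_le_aux (x d0 : ℝ) (hx : 2 ≤ x) (h0 : 0 < d0) (h1 : d0 < 1) :
    Real.Gamma x ≤ Real.Gamma (x + d0) * (x + d0 - 1) ^ (-d0) := by
  have hx0 : (0:ℝ) < x + d0 - 1 := by linarith
  have hG0 : 0 < Real.Gamma (x + d0) := Real.Gamma_pos_of_pos (by linarith)
  have key := Real.Gamma_mul_add_mul_le_rpow_Gamma_mul_rpow_Gamma
    (s := x + d0) (t := x + d0 - 1) (a := 1 - d0) (b := d0)
    (by linarith) (by linarith) (by linarith) h0 (by ring)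
  have harg : (1 - d0) * (x + d0) + d0 * (x + d0 - 1) = x := by ring
  rw [harg] at key
  have hrec : Real.Gamma (x + d0 - 1) = Real.Gamma (x + d0) / (x + d0 - 1) := by
    rw [show x + d0 = (x + d0 - 1) + 1 by ring, Real.Gamma_add_one hx0.ne']
    rw [show x + d0 - 1 + 1 - 1 = x + d0 - 1 by ring, mul_div_cancel_left₀ _ hx0.ne']
  rw [hrec, Real.div_rpow hG0.le hx0.le] at key
  have heq : Real.Gamma (x + d0) ^ (1 - d0) * (Real.Gamma (x + d0) ^ d0 / (x + d0 - 1) ^ d0)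
      = Real.Gamma (x + d0) * (x + d0 - 1) ^ (-d0) := by
    rw [Real.rpow_neg hx0.le, div_eq_mul_inv, ← mul_assoc, ← Real.rpow_add hG0]
    norm_num
  rw [heq] at key
  exact key

set_option maxHeartbeats 1000000 in
/-- For `m' > m ≥ 1` and integer `i ≥ 1`,
`Γ(i+m)/Γ(i) + m ∑_{n=i+1}^∞ Γ(n+m−1)Γ(i+m')/(Γ(i)Γ(n+m'))
  = Γ(i+m)/Γ(i)·(1 + m/(m'−m)) = (m'/(m'−m))·Γ(i+m)/Γ(i)`. -/
theorem stmt_19 (m m' : ℝ) (hm : 1 ≤ m) (hmm : m < m') (i : ℕ) (hi : 1 ≤ i) :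
    Real.Gamma ((i : ℝ) + m) / Real.Gamma i +
        m * ∑' k : ℕ,
          Real.Gamma (((i + 1 + k : ℕ) : ℝ) + m - 1) * Real.Gamma ((i : ℝ) + m') /
            (Real.Gamma i * Real.Gamma (((i + 1 + k : ℕ) : ℝ) + m'))
      = Real.Gamma ((i : ℝ) + m) / Real.Gamma i * (1 + m / (m' - m)) ∧
    Real.Gamma ((i : ℝ) + m) / Real.Gamma i * (1 + m / (m' - m))
      = (m' / (m' - m)) * (Real.Gamma ((i : ℝ) + m) / Real.Gamma i) := by
  have hi1 : (1:ℝ) ≤ (i:ℝ) := by exact_mod_cast hi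
  have hd : 0 < m' - m := by linarith
  have hGi : 0 < Real.Gamma i := Real.Gamma_pos_of_pos (by linarith)
  have hGim : 0 < Real.Gamma ((i:ℝ) + m) := Real.Gamma_pos_of_pos (by linarith)
  have hGim' : 0 < Real.Gamma ((i:ℝ) + m') := Real.Gamma_pos_of_pos (by linarith)
  set s : ℕ → ℝ := fun k => Real.Gamma ((i:ℝ) + k + m) / Real.Gamma ((i:ℝ) + k + m') with hs
  have hk0 : ∀ k : ℕ, (0:ℝ) ≤ (k:ℝ) := fun k => Nat.cast_nonneg k
  have hpos : ∀ k : ℕ, 0 < Real.Gamma ((i:ℝ) + k + m) ∧ 0 < Real.Gamma ((i:ℝ) + k + m') :=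
    fun k => ⟨Real.Gamma_pos_of_pos (by have := hk0 k; linarith),
      Real.Gamma_pos_of_pos (by have := hk0 k; linarith)⟩
  have hpos1 : ∀ k : ℕ, 0 < Real.Gamma ((i:ℝ) + k + 1 + m') :=
    fun k => Real.Gamma_pos_of_pos (by have := hk0 k; linarith)
  -- telescoping identity
  have htel : ∀ k : ℕ, s k - s (k + 1)
      = (m' - m) * (Real.Gamma ((i:ℝ) + k + m) / Real.Gamma ((i:ℝ) + k + 1 + m')) := by
    intro k
    have hk := hk0 k
    have h1 : Real.Gamma ((i:ℝ) + (k+1 : ℕ) + m)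
        = ((i:ℝ) + k + m) * Real.Gamma ((i:ℝ) + k + m) := by
      push_cast
      rw [show (i:ℝ) + ((k:ℝ) + 1) + m = ((i:ℝ) + k + m) + 1 by ring,
        Real.Gamma_add_one (by linarith)]
    have h2 : Real.Gamma ((i:ℝ) + (k+1 : ℕ) + m')
        = ((i:ℝ) + k + m') * Real.Gamma ((i:ℝ) + k + m') := by
      push_cast
      rw [show (i:ℝ) + ((k:ℝ) + 1) + m' = ((i:ℝ) + k + m') + 1 by ring,
        Real.Gamma_add_one (by linarith)]
    have h3 : Real.Gamma ((i:ℝ) + k + 1 + m')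
        = ((i:ℝ) + k + m') * Real.Gamma ((i:ℝ) + k + m') := by
      rw [show (i:ℝ) + k + 1 + m' = ((i:ℝ) + k + m') + 1 by ring,
        Real.Gamma_add_one (by linarith)]
    have hx : (0:ℝ) < (i:ℝ) + k + m' := by linarith
    have hgp := (hpos k).2
    simp only [hs, h1, h2, h3]
    field_simp
    ring
  -- decay of s
  set d0 : ℝ := min (m' - m) (1/2) with hd0
  have hd00 : 0 < d0 := lt_min hd one_half_pos
  have hd01 : d0 < 1 := lt_of_le_of_lt (min_le_right _ _) (by norm_num)
  have hd0le : d0 ≤ m' - m := min_le_left _ _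
  have hbound : ∀ k : ℕ, s k ≤ ((i:ℝ) + k + m + d0 - 1) ^ (-d0) := by
    intro k
    have hk := hk0 k
    have hx2 : (2:ℝ) ≤ (i:ℝ) + k + m := by linarith
    have h1 := gamma_ratio_le_aux ((i:ℝ) + k + m) d0 hx2 hd00 hd01
    have hmono : Real.Gamma ((i:ℝ) + k + m + d0) ≤ Real.Gamma ((i:ℝ) + k + m') := by
      rcases eq_or_lt_of_le hd0le with h | h
      · rw [show (i:ℝ) + k + m + d0 = (i:ℝ) + k + m' by rw [h]; ring]
      · exact le_of_lt (Real.Gamma_strictMonoOn_Ici (by simp only [Set.mem_Ici]; linarith)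
          (by simp only [Set.mem_Ici]; linarith) (by linarith))
    have hd0pos : 0 < Real.Gamma ((i:ℝ) + k + m + d0) :=
      Real.Gamma_pos_of_pos (by linarith)
    calc s k ≤ Real.Gamma ((i:ℝ) + k + m) / Real.Gamma ((i:ℝ) + k + m + d0) :=
          div_le_div_of_nonneg_left (hpos k).1.le hd0pos hmono
      _ ≤ ((i:ℝ) + k + m + d0 - 1) ^ (-d0) := by
          rw [div_le_iff₀ hd0pos, mul_comm]
          exact h1
  have hs0 : Tendsto s atTop (nhds 0) := by
    apply squeeze_zero (fun k => div_nonneg (hpos k).1.le (hpos k).2.le) hbound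
    have h1 : Tendsto (fun k : ℕ => (i:ℝ) + k + m + d0 - 1) atTop atTop := by
      have he : (fun k : ℕ => (i:ℝ) + k + m + d0 - 1)
          = fun k : ℕ => (k:ℝ) + ((i:ℝ) + m + d0 - 1) := by funext k; ring
      rw [he]
      exact tendsto_atTop_add_const_right _ _ tendsto_natCast_atTop_atTop
    exact (tendsto_rpow_neg_atTop hd00).comp h1
  -- HasSum of the telescoping series
  have hnn : ∀ k : ℕ, 0 ≤ s k - s (k + 1) := by
    intro k
    rw [htel k]
    exact mul_nonneg hd.le (div_nonneg (hpos k).1.le (hpos1 k).le)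
  have hsum : HasSum (fun k => s k - s (k + 1)) (s 0) := by
    rw [hasSum_iff_tendsto_nat_of_nonneg hnn]
    have heq : ∀ n : ℕ, ∑ k ∈ Finset.range n, (s k - s (k + 1)) = s 0 - s n :=
      fun n => Finset.sum_range_sub' s n
    simp only [heq]
    simpa using (tendsto_const_nhds (x := s 0)).sub hs0
  -- identify the series in the statement
  have hterm : ∀ k : ℕ, Real.Gamma (((i + 1 + k : ℕ) : ℝ) + m - 1) * Real.Gamma ((i : ℝ) + m') /
      (Real.Gamma i * Real.Gamma (((i + 1 + k : ℕ) : ℝ) + m'))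
      = (Real.Gamma ((i:ℝ) + m') / (Real.Gamma i * (m' - m))) * (s k - s (k + 1)) := by
    intro k
    rw [htel k]
    have e1 : ((i + 1 + k : ℕ) : ℝ) + m - 1 = (i:ℝ) + k + m := by push_cast; ring
    have e2 : ((i + 1 + k : ℕ) : ℝ) + m' = (i:ℝ) + k + 1 + m' := by push_cast; ring
    rw [e1, e2]
    have h2 := hpos1 k
    field_simp
  have hsum2 : HasSum (fun k : ℕ =>
      Real.Gamma (((i + 1 + k : ℕ) : ℝ) + m - 1) * Real.Gamma ((i : ℝ) + m') /
        (Real.Gamma i * Real.Gamma (((i + 1 + k : ℕ) : ℝ) + m')))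
      ((Real.Gamma ((i:ℝ) + m') / (Real.Gamma i * (m' - m))) * s 0) :=
    (hsum.mul_left _).congr_fun fun k => hterm k
  have hts : (∑' k : ℕ, Real.Gamma (((i + 1 + k : ℕ) : ℝ) + m - 1) * Real.Gamma ((i : ℝ) + m') /
      (Real.Gamma i * Real.Gamma (((i + 1 + k : ℕ) : ℝ) + m')))
      = (Real.Gamma ((i:ℝ) + m') / (Real.Gamma i * (m' - m))) * s 0 := hsum2.tsum_eq
  have hs0val : s 0 = Real.Gamma ((i:ℝ) + m) / Real.Gamma ((i:ℝ) + m') := by simp [hs]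
  constructor
  · rw [hts, hs0val]
    field_simp
  · field_simp
    ring
end
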